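/- Let n ≥ 2, c ∈ ℂ^×, and let x = (x_2,…,x_{2n−1}) be nonzero complex numbers such that all denominators occurring below are nonzero. Then ε_0(e_0^c(x)) = c^{−1}·ε_0(x), where ε_0(x) = x_{n+1}·S(x). -/

import Mathlib

noncomputable section

/-- `Sf n x k = ∑_{j=2}^{k} x_j / x_{n+j-1}` (so `Sf n x 1 = 0`, `S(x) = Sf n x n`). -/
def Sf (n : ℕ) (x : ℕ → ℂ) (k : ℕ) : ℂ :=
  ∑ j ∈ Finset.Icc 2 k, x j / x (n + j - 1)

/-- `Tf n x k = ∑_{j=k+1}^{n} x_j / x_{n+j-1}` (so `Tf n x n = 0`). -/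
def Tf (n : ℕ) (x : ℕ → ℂ) (k : ℕ) : ℂ :=
  ∑ j ∈ Finset.Icc (k + 1) n, x j / x (n + j - 1)

/-- The rational map `e_0^c`. -/
def e0M (n : ℕ) (c : ℂ) (x : ℕ → ℂ) (k : ℕ) : ℂ :=
  if k ≤ n - 1 then x k * Sf n x n / (c * Sf n x k + Tf n x k)
  else if k ≤ n + 1 then x k / c
  else x k * (c * Sf n x (k - n) + Tf n x (k - n)) / (c * Sf n x n)

/-- `ε_0(x) = x_{n+1}·S(x)`. -/
def eps0 (n : ℕ) (x : ℕ → ℂ) : ℂ := x (n + 1) * Sf n x n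

lemma Sf_one (n : ℕ) (x : ℕ → ℂ) : Sf n x 1 = 0 := by
  simp [Sf]

lemma Sf_succ (n : ℕ) (x : ℕ → ℂ) (k : ℕ) (hk : 1 ≤ k) :
    Sf n x (k + 1) = Sf n x k + x (k + 1) / x (n + k) := by
  rw [Sf, Sf, Finset.sum_Icc_succ_top (by omega)]
  have h : n + (k + 1) - 1 = n + k := by omega
  rw [h]

lemma Tf_split (n : ℕ) (x : ℕ → ℂ) (k : ℕ) (hk : k + 1 ≤ n) :
    Tf n x k = x (k + 1) / x (n + k) + Tf n x (k + 1) := by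
  rw [Tf, Tf, ← Finset.add_sum_erase _ _ (show k + 1 ∈ Finset.Icc (k+1) n by
    simp [Finset.mem_Icc]; omega), Finset.Icc_erase_left]
  have h1 : n + (k + 1) - 1 = n + k := by omega
  have h2 : Finset.Ioc (k+1) n = Finset.Icc (k+1+1) n := by
    ext y; simp [Finset.mem_Icc, Finset.mem_Ioc]
  rw [h1, h2]

lemma SfTf (n : ℕ) (x : ℕ → ℂ) (k : ℕ) (hk : 1 ≤ k) (hkn : k ≤ n) :
    Sf n x n = Sf n x k + Tf n x k := by
  rw [Sf, Sf, Tf]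
  have h1 : Finset.Icc 2 k = Finset.Ioc 1 k := by
    ext y; simp [Finset.mem_Icc, Finset.mem_Ioc]; omega
  have h2 : Finset.Icc (k+1) n = Finset.Ioc k n := by
    ext y; simp [Finset.mem_Icc, Finset.mem_Ioc]
  have h3 : Finset.Icc 2 n = Finset.Ioc 1 n := by
    ext y; simp [Finset.mem_Icc, Finset.mem_Ioc]; omega
  rw [h1, h2, h3, Finset.sum_Ioc_consecutive _ hk hkn]

/-- Term formula: for `2 ≤ j ≤ n-1`,
`x′_j / x′_{n+j-1} = c·S²·(x_j/x_{n+j-1}) / (u_j · u_{j-1})`. -/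
lemma termA (n : ℕ) (c : ℂ) (hc : c ≠ 0) (x : ℕ → ℂ)
    (hx : ∀ k, 2 ≤ k → k ≤ 2 * n - 1 → x k ≠ 0)
    (hS : Sf n x n ≠ 0)
    (hu : ∀ j, 1 ≤ j → j ≤ n - 1 → c * Sf n x j + Tf n x j ≠ 0)
    (j : ℕ) (hj2 : 2 ≤ j) (hjn : j ≤ n - 1) :
    e0M n c x j / e0M n c x (n + j - 1)
      = c * Sf n x n ^ 2 * (x j / x (n + j - 1)) /
        ((c * Sf n x j + Tf n x j) * (c * Sf n x (j - 1) + Tf n x (j - 1))) := by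
  have hn : 3 ≤ n := by omega
  have h1 : e0M n c x j = x j * Sf n x n / (c * Sf n x j + Tf n x j) := by
    rw [e0M, if_pos (by omega)]
  have huj := hu j (by omega) hjn
  have hujm := hu (j - 1) (by omega) (by omega)
  have hxden : x (n + j - 1) ≠ 0 := hx _ (by omega) (by omega)
  rcases eq_or_lt_of_le hj2 with h2 | h3
  · -- j = 2
    subst h2
    have hidx : n + 2 - 1 = n + 1 := by omega
    have h2' : e0M n c x (n + 1) = x (n + 1) / c := by
      rw [e0M, if_neg (by omega), if_pos (by omega)]
    have hT1 : Tf n x (2 - 1) = Sf n x n := by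
      rw [SfTf n x 1 le_rfl (by omega), Sf_one]; norm_num
    have hS1 : Sf n x (2 - 1) = 0 := Sf_one n x
    rw [hidx] at hxden ⊢
    rw [h1, h2', hT1, hS1]
    field_simp
    ring_nf; rw [mul_assoc, mul_inv_cancel₀ hS, mul_one]
  · -- 3 ≤ j
    have h2' : e0M n c x (n + j - 1)
        = x (n + j - 1) * (c * Sf n x (j - 1) + Tf n x (j - 1)) / (c * Sf n x n) := by
      rw [e0M, if_neg (by omega), if_neg (by omega)]
      have : n + j - 1 - n = j - 1 := by omega
      rw [this]
    rw [h1, h2']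
    field_simp

/-- Partial sums telescope: `∑_{j=2}^{k} x′_j/x′_{n+j-1} = c·S·S_k / u_k`. -/
lemma sumB (n : ℕ) (c : ℂ) (hc : c ≠ 0) (x : ℕ → ℂ)
    (hx : ∀ k, 2 ≤ k → k ≤ 2 * n - 1 → x k ≠ 0)
    (hS : Sf n x n ≠ 0)
    (hu : ∀ j, 1 ≤ j → j ≤ n - 1 → c * Sf n x j + Tf n x j ≠ 0) :
    ∀ k, 1 ≤ k → k ≤ n - 1 →
      ∑ j ∈ Finset.Icc 2 k, e0M n c x j / e0M n c x (n + j - 1)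
        = c * Sf n x n * Sf n x k / (c * Sf n x k + Tf n x k) := by
  intro k
  induction k with
  | zero => omega
  | succ k ih =>
    intro _ hk1
    rcases Nat.eq_or_lt_of_le (show 1 ≤ k + 1 by omega) with h1 | h1
    · -- k + 1 = 1
      have : k = 0 := by omega
      subst this
      simp [Sf_one]
    · -- k ≥ 1
      have hk : 1 ≤ k := by omega
      rw [Finset.sum_Icc_succ_top (by omega), ih hk (by omega),
        termA n c hc x hx hS hu (k+1) (by omega) hk1]
      have hi1 : n + (k + 1) - 1 = n + k := by omega
      have hi2 : k + 1 - 1 = k := by omega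
      rw [hi1, hi2]
      have hS' := Sf_succ n x k hk
      have hT' := Tf_split n x k (by omega)
      have hSn := SfTf n x (k + 1) (by omega) (by omega)
      set ρ := x (k+1) / x (n+k) with hρ
      have h1' : c * Sf n x k + (ρ + Tf n x (k+1)) ≠ 0 := by
        rw [← hT']; exact hu k hk (by omega)
      have h2' : c * (Sf n x k + ρ) + Tf n x (k+1) ≠ 0 := by
        rw [← hS']; exact hu (k+1) (by omega) hk1
      rw [hSn, hS', hT']
      field_simp [h1', h2']
      ring

/-- `ε_0(e_0^c(x)) = c⁻¹·ε_0(x)`. -/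
theorem stmt8 (n : ℕ) (hn : 2 ≤ n) (c : ℂ) (hc : c ≠ 0) (x : ℕ → ℂ)
    (hx : ∀ k, 2 ≤ k → k ≤ 2 * n - 1 → x k ≠ 0)
    (hS : Sf n x n ≠ 0)
    (hden : ∀ k, 2 ≤ k → k ≤ n - 1 → c * Sf n x k + Tf n x k ≠ 0) :
    eps0 n (e0M n c x) = c⁻¹ * eps0 n x := by
  have hu : ∀ j, 1 ≤ j → j ≤ n - 1 → c * Sf n x j + Tf n x j ≠ 0 := by
    intro j hj1 hjn
    rcases Nat.eq_or_lt_of_le hj1 with h | h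
    · rw [← h, Sf_one]
      have : Tf n x 1 = Sf n x n := by
        rw [SfTf n x 1 le_rfl (by omega), Sf_one]; ring
      rw [this]; simpa using hS
    · exact hden j (by omega) hjn
  have he1 : e0M n c x (n + 1) = x (n + 1) / c := by
    rw [e0M, if_neg (by omega), if_pos (by omega)]
  rcases Nat.eq_or_lt_of_le hn with h2 | h3
  · -- n = 2
    subst h2
    have hx2 : x 2 ≠ 0 := hx 2 (by omega) (by omega)
    have hx3 : x 3 ≠ 0 := hx 3 (by omega) (by omega)
    have he2 : e0M 2 c x 2 = x 2 / c := by
      rw [e0M, if_neg (by omega), if_pos (by omega)]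
    have hSf : ∀ y : ℕ → ℂ, Sf 2 y 2 = y 2 / y 3 := by
      intro y; rw [Sf]; norm_num
    rw [eps0, eps0, hSf, hSf, he1] at *
    rw [he2, he1]
    field_simp
  · -- n ≥ 3
    have hn3 : 3 ≤ n := h3
    have hSsum : Sf n (e0M n c x) n = Sf n x n := by
      have hicc : Finset.Icc 2 n = insert n (Finset.Icc 2 (n - 1)) := by
        ext y; simp [Finset.mem_Icc, Finset.mem_insert]; omega
      have hnot : n ∉ Finset.Icc 2 (n - 1) := by
        simp [Finset.mem_Icc]; omega
      rw [Sf, hicc, Finset.sum_insert hnot,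
        sumB n c hc x hx hS hu (n - 1) (by omega) le_rfl]
      have hen : e0M n c x n = x n / c := by
        rw [e0M, if_neg (by omega), if_pos (by omega)]
      have henn : e0M n c x (n + n - 1)
          = x (n + n - 1) * (c * Sf n x (n - 1) + Tf n x (n - 1)) / (c * Sf n x n) := by
        rw [e0M, if_neg (by omega), if_neg (by omega)]
        have : n + n - 1 - n = n - 1 := by omega
        rw [this]
      rw [hen, henn]
      have hS' : Sf n x n = Sf n x (n - 1) + x n / x (n + n - 1) := by
        have h := Sf_succ n x (n - 1) (by omega)
        have e1 : n - 1 + 1 = n := by omega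
        have e2 : n + (n - 1) = n + n - 1 := by omega
        rw [e1, e2] at h
        exact h
      have hT' : Tf n x (n - 1) = x n / x (n + n - 1) := by
        have h := Tf_split n x (n - 1) (by omega)
        have e1 : n - 1 + 1 = n := by omega
        have e2 : n + (n - 1) = n + n - 1 := by omega
        rw [e1, e2] at h
        have hTn : Tf n x n = 0 := by simp [Tf]
        rw [hTn, add_zero] at h
        exact h
      have hun : c * Sf n x (n - 1) + Tf n x (n - 1) ≠ 0 := hu (n - 1) (by omega) le_rfl
      have hxn : x n ≠ 0 := hx n (by omega) (by omega)
      have hxnn : x (n + n - 1) ≠ 0 := hx _ (by omega) (by omega)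
      set ρ := x n / x (n + n - 1) with hρ
      have hxρ : x n = ρ * x (n + n - 1) := by
        rw [hρ, div_mul_cancel₀ _ hxnn]
      rw [hT'] at hun
      rw [hT', hS', hxρ]
      field_simp [hun]
      ring
    rw [eps0, eps0, hSsum, he1]
    field_simp
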